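/- There exist finite groups G and H with μ(G × H) < μ(G) + μ(H); specifically, for G = G(4,4,3) and H = C₄, μ(G × H) = 12 while μ(G) + μ(H) = 16. -/

import Mathlib

open Multiplicative

/-- Cyclic group of order m, multiplicatively. -/
abbrev Cyc (m : ℕ) := Multiplicative (ZMod m)

/-- Minimal faithful permutation degree. -/
noncomputable def mu (G : Type*) [Group G] : ℕ :=
  sInf {n | ∃ f : G →* Equiv.Perm (Fin n), Function.Injective f}

/-- Sym(n) acting on the base group (C_m)^n by permuting coordinates. -/
def wreathAut (m n : ℕ) : Equiv.Perm (Fin n) →* MulAut (Fin n → Cyc m) where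
  toFun σ :=
    { toFun := fun θ => θ ∘ σ.symm
      invFun := fun θ => θ ∘ σ
      left_inv := fun θ => by ext i; simp
      right_inv := fun θ => by ext i; simp
      map_mul' := fun θ₁ θ₂ => rfl }
  map_one' := by ext θ i; rfl
  map_mul' := fun σ τ => by ext θ i; rfl

/-- The wreath product C_m ≀ Sym(n). -/
abbrev Wr (m n : ℕ) := SemidirectProduct (Fin n → Cyc m) (Equiv.Perm (Fin n)) (wreathAut m n)

/-- A(m,p,n) = {θ ∈ (C_m)^n | (θ₁⋯θₙ)^{m/p} = 1}. -/
def Apn (m p n : ℕ) : Subgroup (Fin n → Cyc m) where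
  carrier := {θ | (∏ i, θ i) ^ (m / p) = 1}
  one_mem' := by simp
  mul_mem' := by
    intro α β hα hβ
    simp only [Set.mem_setOf_eq, Pi.mul_apply] at *
    rw [Finset.prod_mul_distrib, mul_pow, hα, hβ, one_mul]
  inv_mem' := by
    intro α hα
    simp only [Set.mem_setOf_eq, Pi.inv_apply] at *
    rw [Finset.prod_inv_distrib, inv_pow, hα, inv_one]

lemma apn_act_mem {m p n : ℕ} (σ : Equiv.Perm (Fin n)) {θ : Fin n → Cyc m}
    (hθ : θ ∈ Apn m p n) : wreathAut m n σ θ ∈ Apn m p n := by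
  have : ∏ i, θ (σ.symm i) = ∏ i, θ i := Equiv.prod_comp σ.symm θ
  simpa [Apn, wreathAut, Subgroup.mem_mk, Set.mem_setOf_eq, Function.comp, this] using hθ

/-- G(m,p,n) = A(m,p,n) ⋊ Sym(n), realized inside C_m ≀ Sym(n). -/
def Gmpn (m p n : ℕ) : Subgroup (Wr m n) where
  carrier := {g | g.left ∈ Apn m p n}
  one_mem' := by
    show (1 : Wr m n).left ∈ Apn m p n
    rw [SemidirectProduct.one_left]
    exact one_mem _
  mul_mem' := by
    intro g h hg hh
    show (g * h).left ∈ Apn m p n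
    rw [SemidirectProduct.mul_left]
    exact mul_mem hg (apn_act_mem g.right hh)
  inv_mem' := by
    intro g hg
    show g⁻¹.left ∈ Apn m p n
    rw [SemidirectProduct.inv_left]
    exact apn_act_mem _ (inv_mem hg)


open SemidirectProduct

set_option maxRecDepth 100000

instance {N G : Type*} [Group N] [Group G] {φ : G →* MulAut N} [Fintype N] [Fintype G] :
    Fintype (SemidirectProduct N G φ) :=
  Fintype.ofEquiv (N × G)
    { toFun := fun p => ⟨p.1, p.2⟩
      invFun := fun g => (g.left, g.right)
      left_inv := fun _ => rfl
      right_inv := fun _ => rfl }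

instance : DecidablePred (· ∈ Apn 4 4 3) :=
  fun θ => decidable_of_iff ((∏ i, θ i) ^ (4 / 4) = 1) Iff.rfl

instance : DecidablePred (· ∈ Gmpn 4 4 3) :=
  fun g => decidable_of_iff ((∏ i, g.left i) ^ (4 / 4) = 1) Iff.rfl

lemma mem_Gmpn_iff (g : Wr 4 3) : g ∈ Gmpn 4 4 3 ↔ g.left ∈ Apn 4 4 3 := Iff.rfl

lemma mem_Apn_iff (θ : Fin 3 → Cyc 4) : θ ∈ Apn 4 4 3 ↔ (∏ i, θ i) ^ (4 / 4) = 1 := Iff.rfl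

def v1θ : Fin 3 → Cyc 4 := fun i => Multiplicative.ofAdd (![2, 2, 0] i)

def a0θ : Fin 3 → Cyc 4 := fun i => Multiplicative.ofAdd (![1, 1, 2] i)

lemma v1_memA : v1θ ∈ Apn 4 4 3 := by decide

lemma v1_mem : SemidirectProduct.inl v1θ ∈ Gmpn 4 4 3 := by decide

lemma a0_memA : a0θ ∈ Apn 4 4 3 := by decide

lemma a0_sq : a0θ * a0θ = v1θ := by decide

lemma v1_ne : v1θ ≠ 1 := by decide

lemma D3 : ∀ θ : Fin 3 → Cyc 4, θ ∈ Apn 4 4 3 → θ ≠ 1 →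
    (θ * θ = 1 ∨ ((θ * θ) * (θ * θ) = 1 ∧ θ * θ ≠ 1)) := by decide

lemma D4 : ∀ σ : Equiv.Perm (Fin 3), σ ^ 3 = 1 → σ ≠ 1 →
    ∀ θ : Fin 3 → Cyc 4, θ ∈ Apn 4 4 3 → θ * θ = 1 → θ ≠ 1 →
    ∃ k : Fin 3, (θ ∘ ⇑(Equiv.symm (σ ^ (k : ℕ)))) = v1θ := by decide

lemma D5 : ∀ θ : Fin 3 → Cyc 4, θ ^ 3 = 1 → θ = 1 := by decide

lemma cardG : Nat.card (Gmpn 4 4 3) = 96 := by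
  rw [Nat.card_eq_fintype_card]; decide

lemma cardA : Nat.card (Apn 4 4 3) = 16 := by
  rw [Nat.card_eq_fintype_card]; decide

lemma D6 : ∀ c : Cyc 4, c ^ 3 = 1 → c = 1 := by decide

@[simp] lemma wreathAut_apply {m n : ℕ} (σ : Equiv.Perm (Fin n)) (θ : Fin n → Cyc m) (j : Fin n) :
    (wreathAut m n σ θ) j = θ (σ.symm j) := rfl

lemma conj_inl (g : Wr 4 3) (θ : Fin 3 → Cyc 4) :
    g * SemidirectProduct.inl θ * g⁻¹
      = SemidirectProduct.inl (θ ∘ ⇑(Equiv.symm g.right)) := by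
  have h : θ ∘ ⇑(Equiv.symm g.right) = wreathAut 4 3 g.right θ := rfl
  rw [h]
  ext
  · simp [mul_assoc, mul_comm, mul_left_comm]
  · simp

/-- hom between perm groups induced by an equiv -/
def permHom {X Y : Type*} (e : X ≃ Y) : Equiv.Perm X →* Equiv.Perm Y where
  toFun p := (e.symm.trans p).trans e
  map_one' := by ext y; simp
  map_mul' p q := by ext y; simp

lemma permHom_injective {X Y : Type*} (e : X ≃ Y) : Function.Injective (permHom e) := by
  intro p q h
  ext x
  have h2 := Equiv.ext_iff.mp h (e x)
  simpa [permHom] using h2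

lemma mem_muSet {G X : Type*} [Group G] {n : ℕ} (e : X ≃ Fin n) (f : G →* Equiv.Perm X)
    (hf : Function.Injective f) :
    n ∈ {n | ∃ f : G →* Equiv.Perm (Fin n), Function.Injective f} :=
  ⟨(permHom e).comp f, (permHom_injective e).comp hf⟩

lemma mu_eq {G : Type*} [Group G] {d : ℕ}
    (hmem : d ∈ {n | ∃ f : G →* Equiv.Perm (Fin n), Function.Injective f})
    (hlb : ∀ k ∈ {n | ∃ f : G →* Equiv.Perm (Fin n), Function.Injective f}, d ≤ k) :
    mu G = d :=
  le_antisymm (Nat.sInf_le hmem) (hlb _ (Nat.sInf_mem ⟨d, hmem⟩))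

/-- the natural imprimitive action of the wreath product on 12 points -/
def wact (g : Wr 4 3) : Equiv.Perm (Fin 3 × ZMod 4) where
  toFun p := (g.right p.1, Multiplicative.toAdd (g.left (g.right p.1)) + p.2)
  invFun p := (g.right.symm p.1, p.2 - Multiplicative.toAdd (g.left p.1))
  left_inv p := by simp
  right_inv p := by simp

def Phi : Wr 4 3 →* Equiv.Perm (Fin 3 × ZMod 4) where
  toFun := wact
  map_one' := by ext p <;> simp [wact]
  map_mul' g h := by
    ext p
    · simp [wact]
    · simp [wact, add_assoc]

lemma Phi_injective : Function.Injective Phi := by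
  rw [injective_iff_map_eq_one]
  intro g hg
  have hr : g.right = 1 := by
    refine Equiv.ext fun i => ?_
    have := congrArg (fun (p : Equiv.Perm (Fin 3 × ZMod 4)) => (p (i, 0)).1) hg
    simpa [Phi, wact] using this
  have hl : g.left = 1 := by
    funext i
    have := congrArg (fun (p : Equiv.Perm (Fin 3 × ZMod 4)) => (p (i, 0)).2) hg
    simp [Phi, wact, hr] at this
    simpa using congrArg Multiplicative.ofAdd this
  ext
  · rw [hl]; simp
  · rw [hr]; simp

def iotaC : Cyc 4 →* Wr 4 3 where
  toFun c := SemidirectProduct.inl (fun _ => c)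
  map_one' := rfl
  map_mul' a b := by rw [← map_mul]; rfl

lemma iotaC_apply (c : Cyc 4) : iotaC c = SemidirectProduct.inl (fun _ => c) := rfl

lemma iotaC_comm (w : Wr 4 3) (c : Cyc 4) : w * iotaC c = iotaC c * w := by
  ext
  · simp [iotaC_apply, Equiv.Perm.one_symm, add_comm]
  · simp [iotaC_apply]

def Psi : ↥(Gmpn 4 4 3) × Cyc 4 →* Wr 4 3 where
  toFun p := (p.1 : Wr 4 3) * iotaC p.2
  map_one' := by simp
  map_mul' a b := by
    simp only [Prod.fst_mul, Prod.snd_mul, Subgroup.coe_mul, map_mul]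
    exact Commute.mul_mul_mul_comm (iotaC_comm (↑b.1) a.2) _ _

lemma Psi_injective : Function.Injective Psi := by
  rw [injective_iff_map_eq_one]
  rintro ⟨g, c⟩ h
  simp only [Psi, MonoidHom.coe_mk, OneHom.coe_mk] at h
  have hc : iotaC c ∈ Gmpn 4 4 3 := by
    have : iotaC c = (g : Wr 4 3)⁻¹ := eq_inv_of_mul_eq_one_right h
    rw [this]
    exact inv_mem g.2
  have hc1 : c = 1 := by
    rw [mem_Gmpn_iff, mem_Apn_iff] at hc
    have h3 : c ^ 3 = 1 := by
      simpa [iotaC_apply, Fin.prod_univ_three, pow_succ, mul_assoc] using hc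
    exact D6 c h3
  have hg : g = 1 := by
    have : (g : Wr 4 3) = 1 := by
      rw [hc1, map_one, mul_one] at h; exact h
    exact Subtype.ext this
  rw [hg, hc1]; rfl

/-- regular representation of Cyc 4 -/
def rhoC : Cyc 4 →* Equiv.Perm (ZMod 4) where
  toFun c := Equiv.addLeft (Multiplicative.toAdd c)
  map_one' := by ext z; simp
  map_mul' a b := by ext z; simp [add_assoc]

lemma rhoC_injective : Function.Injective rhoC := by
  intro a b h
  have := Equiv.ext_iff.mp h 0
  simpa [rhoC] using this

lemma arith0 : ∀ c < 17, c ∣ 16 → c = 8 ∨ c = 16 ∨ c ∣ 4 := by decide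

lemma arith1 : ∀ r < 7, ∀ c < 5, r ∣ 6 → c ∣ 4 → 9 ≤ r * c → 3 ∣ r * c := by decide

lemma eq_inl_of_right_one {g : Wr 4 3} (h : g.right = 1) :
    g = SemidirectProduct.inl g.left := by
  ext
  · simp
  · rw [h]; simp

lemma eq_one_of_parts {g : Wr 4 3} (hl : g.left = 1) (hr : g.right = 1) : g = 1 := by
  ext
  · rw [hl]; simp
  · rw [hr]; simp

lemma sq_of_right_one {g : Wr 4 3} (h : g.right = 1) :
    g * g = SemidirectProduct.inl (g.left * g.left) := by
  ext
  · simp [h]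
  · simp [h]

lemma right_pow (g : Wr 4 3) (k : ℕ) : (g ^ k).right = g.right ^ k :=
  map_pow SemidirectProduct.rightHom g k

set_option maxHeartbeats 2000000 in
lemma core (n : ℕ) (hn : n ≤ 11) (f : ↥(Gmpn 4 4 3) →* Equiv.Perm (Fin n))
    (hf : Function.Injective f) : False := by
  classical
  set v1 : ↥(Gmpn 4 4 3) := ⟨SemidirectProduct.inl v1θ, v1_mem⟩ with hv1def
  have hv1ne : v1 ≠ 1 := by
    intro h
    apply v1_ne
    have h2 : (SemidirectProduct.inl v1θ : Wr 4 3) = 1 := congrArg Subtype.val h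
    have h3 := congrArg SemidirectProduct.left h2
    simpa using h3
  have hfv1 : f v1 ≠ 1 := fun h => hv1ne (hf (by rw [h, map_one]))
  obtain ⟨x₀, hx₀⟩ : ∃ x, f v1 x ≠ x := by
    by_contra h
    push_neg at h
    exact hfv1 (Equiv.ext h)
  letI : MulAction ↥(Gmpn 4 4 3) (Fin n) := MulAction.compHom _ f
  set H := MulAction.stabilizer (↥(Gmpn 4 4 3)) x₀ with hHdef
  have hv1H : v1 ∉ H := by
    intro h
    rw [hHdef, MulAction.mem_stabilizer_iff] at h
    exact hx₀ h
  -- orbit-stabilizer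
  letI : Fintype ↥(Gmpn 4 4 3) := Fintype.ofFinite _
  have horb : Nat.card (MulAction.orbit (↥(Gmpn 4 4 3)) x₀) * Nat.card ↥H = 96 := by
    rw [← cardG]
    simp only [Nat.card_eq_fintype_card]
    exact MulAction.card_orbit_mul_card_stabilizer_eq_card_group _ _
  have hm : Nat.card (MulAction.orbit (↥(Gmpn 4 4 3)) x₀) ≤ 11 := by
    have h1 : Nat.card (MulAction.orbit (↥(Gmpn 4 4 3)) x₀) ≤ Nat.card (Fin n) :=
      Nat.card_le_card_of_injective _ Subtype.val_injective
    have h2 : Nat.card (Fin n) = n := by simp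
    omega
  have hH9 : 9 ≤ Nat.card ↥H := by
    by_contra hlt
    push_neg at hlt
    nlinarith [horb, hm]
  -- the projection to Sym(3)
  set ψ : ↥H →* Equiv.Perm (Fin 3) :=
    SemidirectProduct.rightHom.comp (((Gmpn 4 4 3).subtype).comp H.subtype) with hψdef
  have hψ_apply : ∀ h : ↥H, ψ h = ((h : ↥(Gmpn 4 4 3)) : Wr 4 3).right := fun h => rfl
  have hdecomp : Nat.card ↥H = Nat.card ψ.range * Nat.card ψ.ker := by
    rw [← Nat.card_congr (QuotientGroup.quotientKerEquivRange ψ).toEquiv]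
    exact Subgroup.card_eq_card_quotient_mul_card_subgroup _
  have hrange6 : Nat.card ψ.range ∣ 6 := by
    have h1 := Subgroup.card_subgroup_dvd_card ψ.range
    have h2 : Nat.card (Equiv.Perm (Fin 3)) = 6 := by
      rw [Nat.card_eq_fintype_card]; decide
    rwa [h2] at h1
  have hker_right : ∀ k : ↥ψ.ker, (((k : ↥H) : ↥(Gmpn 4 4 3)) : Wr 4 3).right = 1 := by
    intro k
    have hk := k.2
    rwa [MonoidHom.mem_ker, hψ_apply] at hk
  -- embedding of the kernel into A
  set j : ↥ψ.ker →* ↥(Apn 4 4 3) :=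
    { toFun := fun k => ⟨(((k : ↥H) : ↥(Gmpn 4 4 3)) : Wr 4 3).left,
        ((k : ↥H) : ↥(Gmpn 4 4 3)).2⟩
      map_one' := by
        apply Subtype.ext
        simp
      map_mul' := fun a b => by
        apply Subtype.ext
        simp [hker_right a] } with hjdef
  have hj : Function.Injective j := by
    rw [injective_iff_map_eq_one]
    intro k hk
    have hl : (((k : ↥H) : ↥(Gmpn 4 4 3)) : Wr 4 3).left = 1 := by
      have h1 := congrArg Subtype.val hk
      simpa [hjdef] using h1
    have hw : (((k : ↥H) : ↥(Gmpn 4 4 3)) : Wr 4 3) = 1 := by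
      ext
      · rw [hl]; simp
      · rw [hker_right k]; simp
    exact Subtype.ext (Subtype.ext (Subtype.ext hw))
  have hcB : Nat.card ↥j.range = Nat.card ↥ψ.ker :=
    (Nat.card_congr (MonoidHom.ofInjective hj).toEquiv).symm
  have hc16 : Nat.card ↥ψ.ker ∣ 16 := by
    have h2 := Subgroup.card_subgroup_dvd_card j.range
    rw [cardA] at h2
    rwa [hcB] at h2
  -- a helper to finish
  have finish : ∀ g : ↥(Gmpn 4 4 3), g ∈ H → (g : Wr 4 3) = SemidirectProduct.inl v1θ → False := by
    intro g hg hgw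
    apply hv1H
    have hgv : v1 = g := Subtype.ext (by rw [hgw])
    rwa [hgv]
  -- case: kernel of ψ is big (card 8 or 16)
  have caseA : Nat.card ↥ψ.ker = 8 ∨ Nat.card ↥ψ.ker = 16 → False := by
    intro hc
    set B := j.range with hBdef
    have hqB : Nat.card (↥(Apn 4 4 3) ⧸ B) * Nat.card ↥B = 16 := by
      rw [← cardA]
      exact (Subgroup.card_eq_card_quotient_mul_card_subgroup B).symm
    have hq2 : Nat.card (↥(Apn 4 4 3) ⧸ B) ∣ 2 := by
      rcases hc with h | h <;> rw [hcB, h] at hqB <;>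
        [(have : Nat.card (↥(Apn 4 4 3) ⧸ B) = 2 := by omega);
         (have : Nat.card (↥(Apn 4 4 3) ⧸ B) = 1 := by omega)] <;>
        rw [this] <;> norm_num
    set a0' : ↥(Apn 4 4 3) := ⟨a0θ, a0_memA⟩ with ha0def
    have hsq1 : (QuotientGroup.mk a0' : ↥(Apn 4 4 3) ⧸ B) ^ 2 = 1 := by
      apply orderOf_dvd_iff_pow_eq_one.mp
      exact dvd_trans (orderOf_dvd_of_pow_eq_one (pow_card_eq_one' (x := QuotientGroup.mk a0'))) hq2
    have hmemB : a0' * a0' ∈ B := by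
      have hq : (QuotientGroup.mk (a0' * a0') : ↥(Apn 4 4 3) ⧸ B) = 1 := by
        have : a0' * a0' = a0' ^ 2 := by rw [pow_two]
        rw [this]
        rw [show (QuotientGroup.mk (a0' ^ 2) : ↥(Apn 4 4 3) ⧸ B)
              = (QuotientGroup.mk a0' : ↥(Apn 4 4 3) ⧸ B) ^ 2 from rfl]
        exact hsq1
      exact (QuotientGroup.eq_one_iff _).mp hq
    obtain ⟨k, hk⟩ := hmemB
    refine finish ((k : ↥H) : ↥(Gmpn 4 4 3)) (k : ↥H).2 ?_
    have h2 : (a0' * a0' : ↥(Apn 4 4 3)).val = v1θ := by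
      rw [Subgroup.coe_mul]
      exact a0_sq
    have h1 : (((k : ↥H) : ↥(Gmpn 4 4 3)) : Wr 4 3).left = v1θ := by
      rw [← h2, ← hk]
      rfl
    rw [eq_inl_of_right_one (hker_right k), h1]
  -- main case split
  have hcle : Nat.card ↥ψ.ker < 17 := Nat.lt_succ_of_le (Nat.le_of_dvd (by norm_num) hc16)
  rcases arith0 (Nat.card ↥ψ.ker) hcle hc16 with h8 | h16 | hc4
  · exact caseA (Or.inl h8)
  · exact caseA (Or.inr h16)
  -- now the kernel is small, so 3 divides |H|
  have hr6 : Nat.card ψ.range ≤ 6 := Nat.le_of_dvd (by norm_num) hrange6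
  have hc4' : Nat.card ↥ψ.ker ≤ 4 := Nat.le_of_dvd (by norm_num) hc4
  have h3H : 3 ∣ Nat.card ↥H := by
    rw [hdecomp]
    exact arith1 _ (by omega) _ (by omega) hrange6 hc4 (by omega)
  haveI : Fact (Nat.Prime 3) := ⟨by norm_num⟩
  obtain ⟨t, ht⟩ := exists_prime_orderOf_dvd_card' (G := ↥H) 3 h3H
  have ht3 : t ^ 3 = 1 := by
    have h1 := pow_orderOf_eq_one t
    rwa [ht] at h1
  have htne : t ≠ 1 := by
    intro h
    rw [h, orderOf_one] at ht
    norm_num at ht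
  set tΓ : ↥(Gmpn 4 4 3) := ((t : ↥H) : ↥(Gmpn 4 4 3)) with htΓdef
  set tw : Wr 4 3 := (tΓ : Wr 4 3) with htwdef
  have htw3 : tw ^ 3 = 1 := by
    have h1 : (((t ^ 3 : ↥H) : ↥(Gmpn 4 4 3)) : Wr 4 3) = 1 := by rw [ht3]; rfl
    rw [htwdef, htΓdef, ← h1]
    norm_cast
  set σ : Equiv.Perm (Fin 3) := tw.right with hσdef
  have hσ3 : σ ^ 3 = 1 := by
    rw [hσdef, ← right_pow, htw3]
    rfl
  have hσne : σ ≠ 1 := by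
    intro hσ1
    have htwl : tw = SemidirectProduct.inl tw.left := eq_inl_of_right_one hσ1
    have hl3 : tw.left ^ 3 = 1 := by
      have h1 : (SemidirectProduct.inl (tw.left ^ 3) : Wr 4 3) = 1 := by
        rw [map_pow, ← htwl, htw3]
      have h2 := congrArg SemidirectProduct.left h1
      rw [SemidirectProduct.left_inl] at h2; exact h2
    have hl1 : tw.left = 1 := D5 _ hl3
    apply htne
    have htw1 : tw = 1 := by rw [htwl, hl1, map_one]
    exact Subtype.ext (Subtype.ext htw1)
  -- a nontrivial element of the kernel of ψ
  haveI hknt : Nontrivial ↥ψ.ker := by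
    apply Finite.one_lt_card_iff_nontrivial.mp
    nlinarith [hdecomp, hH9, hr6]
  obtain ⟨a, hane⟩ := exists_ne (1 : ↥ψ.ker)
  set gw : Wr 4 3 := (((a : ↥H) : ↥(Gmpn 4 4 3)) : Wr 4 3) with hgwdef
  have hgwr : gw.right = 1 := hker_right a
  have hgwlA : gw.left ∈ Apn 4 4 3 := ((a : ↥H) : ↥(Gmpn 4 4 3)).2
  have hgwl_ne : gw.left ≠ 1 := by
    intro h1
    apply hane
    exact Subtype.ext (Subtype.ext (Subtype.ext (eq_one_of_parts h1 hgwr)))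
  -- produce an element of H ∩ V
  have hVel : ∃ (w : ↥(Gmpn 4 4 3)) (θw : Fin 3 → Cyc 4), w ∈ H ∧
      (w : Wr 4 3) = SemidirectProduct.inl θw ∧ θw ∈ Apn 4 4 3 ∧ θw * θw = 1 ∧ θw ≠ 1 := by
    rcases D3 gw.left hgwlA hgwl_ne with hsq | ⟨hsq, hne⟩
    · refine ⟨((a : ↥H) : ↥(Gmpn 4 4 3)), gw.left, (a : ↥H).2, ?_, hgwlA, hsq, hgwl_ne⟩
      ext
      · rfl
      · rw [← hgwdef, hgwr]; simp
    · refine ⟨((a : ↥H) : ↥(Gmpn 4 4 3)) * ((a : ↥H) : ↥(Gmpn 4 4 3)), gw.left * gw.left,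
        H.mul_mem (a : ↥H).2 (a : ↥H).2, ?_, (Apn 4 4 3).mul_mem hgwlA hgwlA, hsq, hne⟩
      rw [Subgroup.coe_mul, ← hgwdef]
      exact sq_of_right_one hgwr
  obtain ⟨w, θw, hwH, hwval, hθA, hθsq, hθne⟩ := hVel
  obtain ⟨k, hk⟩ := D4 σ hσ3 hσne θw hθA hθsq hθne
  -- conjugate w into position
  set y : ↥(Gmpn 4 4 3) := tΓ ^ (k : ℕ) * w * (tΓ ^ (k : ℕ))⁻¹ with hydef
  have hyH : y ∈ H :=
    H.mul_mem (H.mul_mem (H.pow_mem (t : ↥H).2 _) hwH) (H.inv_mem (H.pow_mem (t : ↥H).2 _))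
  refine finish y hyH ?_
  have hyval : (y : Wr 4 3) = tw ^ (k : ℕ) * (w : Wr 4 3) * (tw ^ (k : ℕ))⁻¹ := by
    rw [hydef, htwdef]
    norm_cast
  have hright : (tw ^ (k : ℕ)).right = σ ^ (k : ℕ) := by
    rw [right_pow, hσdef]
  rw [hyval, hwval, conj_inl, hright, hk]

noncomputable def e12 : (Fin 3 × ZMod 4) ≃ Fin 12 :=
  Fintype.equivFinOfCardEq (by simp)

noncomputable def e4 : ZMod 4 ≃ Fin 4 :=
  Fintype.equivFinOfCardEq (by simp)

lemma muG_mem12 :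
    12 ∈ {n | ∃ f : ↥(Gmpn 4 4 3) →* Equiv.Perm (Fin n), Function.Injective f} :=
  mem_muSet e12 (Phi.comp (Gmpn 4 4 3).subtype)
    (Phi_injective.comp (Subgroup.subtype_injective _))

lemma muGC_mem12 :
    12 ∈ {n | ∃ f : (↥(Gmpn 4 4 3) × Cyc 4) →* Equiv.Perm (Fin n), Function.Injective f} :=
  mem_muSet e12 (Phi.comp Psi) (Phi_injective.comp Psi_injective)

lemma muC_mem4 : 4 ∈ {n | ∃ f : Cyc 4 →* Equiv.Perm (Fin n), Function.Injective f} :=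
  mem_muSet e4 rhoC rhoC_injective

lemma muC_lb : ∀ k ∈ {n | ∃ f : Cyc 4 →* Equiv.Perm (Fin n), Function.Injective f}, 4 ≤ k := by
  rintro k ⟨f, hf⟩
  by_contra hlt
  push_neg at hlt
  have h4 : Nat.card ↥f.range = 4 := by
    rw [← Nat.card_congr (MonoidHom.ofInjective hf).toEquiv, Nat.card_eq_fintype_card]
    decide
  have hdvd := Subgroup.card_subgroup_dvd_card f.range
  rw [h4] at hdvd
  have hperm : Nat.card (Equiv.Perm (Fin k)) = Nat.factorial k := by
    rw [Nat.card_eq_fintype_card, Fintype.card_perm, Fintype.card_fin]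
  rw [hperm] at hdvd
  interval_cases k <;> revert hdvd <;> decide

lemma muG_lb : ∀ k ∈ {n | ∃ f : ↥(Gmpn 4 4 3) →* Equiv.Perm (Fin n), Function.Injective f},
    12 ≤ k := by
  rintro k ⟨f, hf⟩
  by_contra h
  push_neg at h
  exact core k (by omega) f hf

lemma muGC_lb :
    ∀ k ∈ {n | ∃ f : (↥(Gmpn 4 4 3) × Cyc 4) →* Equiv.Perm (Fin n), Function.Injective f},
    12 ≤ k := by
  rintro k ⟨f, hf⟩
  by_contra h
  push_neg at h
  have hinl : Function.Injective ⇑(MonoidHom.inl (↥(Gmpn 4 4 3)) (Cyc 4)) := by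
    intro a b hab
    simpa using congrArg Prod.fst hab
  exact core k (by omega) (f.comp (MonoidHom.inl _ _)) (hf.comp hinl)

theorem stmt17 :
    (∃ (G H : Type) (_ : Group G) (_ : Group H),
      Finite G ∧ Finite H ∧ mu (G × H) < mu G + mu H) ∧
    mu (Gmpn 4 4 3 × Cyc 4) = 12 ∧ mu (Gmpn 4 4 3) + mu (Cyc 4) = 16 := by
  have hG : mu ↥(Gmpn 4 4 3) = 12 := mu_eq muG_mem12 muG_lb
  have hGC : mu (↥(Gmpn 4 4 3) × Cyc 4) = 12 := mu_eq muGC_mem12 muGC_lb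
  have hC : mu (Cyc 4) = 4 := mu_eq muC_mem4 muC_lb
  refine ⟨⟨↥(Gmpn 4 4 3), Cyc 4, inferInstance, inferInstance, inferInstance, inferInstance, ?_⟩,
    ?_, ?_⟩
  · rw [hGC, hG, hC]
    norm_num
  · exact hGC
  · rw [hG, hC]
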